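/- Comparison principle for Monge solutions of the eikonal equation: let (X,d) be a complete length space, Ω ⊊ X a bounded open set, f: Ω → ℝ bounded with inf_Ω f > 0. Let u, v ∈ C(cl Ω) be bounded, locally Lipschitz on Ω, with |∇⁻u|(x) ≤ f(x) for all x ∈ Ω (Monge subsolution) and |∇⁻v|(x) ≥ f(x) for all x ∈ Ω (Monge supersolution). If limsup as δ→0 of sup{u(x)−v(x) : x ∈ cl Ω, dist(x,∂Ω) ≤ δ} ≤ 0, then u ≤ v on cl Ω. -/

import Mathlib

open Filter Topology Set

/-- Sub-slope `|∇⁻w|(x) = limsup_{y→x} max{w(x)−w(y),0}/d(x,y)`. -/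
noncomputable def subSlope {X : Type*} [MetricSpace X] (w : X → ℝ) (x : X) : ℝ :=
  Filter.limsup (fun y => max (w x - w y) 0 / dist x y) (𝓝[≠] x)


lemma ekeland_aux {α : Type*} [MetricSpace α] [CompleteSpace α]
    (F : α → ℝ) (hF : Continuous F) (B : ℝ) (hB : ∀ x, B ≤ F x)
    (c : ℝ) (hc : 0 < c) (x0 : α) :
    ∃ z : α, F z ≤ F x0 ∧ ∀ y : α, F z - c * dist z y ≤ F y := by
  set S : α → Set α := fun x => {y | F y + c * dist x y ≤ F x} with hS
  have hself : ∀ x, x ∈ S x := fun x => by simp [hS]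
  have htrans : ∀ x y z, y ∈ S x → z ∈ S y → z ∈ S x := by
    intro x y z hy hz
    simp only [hS, Set.mem_setOf_eq] at *
    have htri := dist_triangle x y z
    nlinarith [dist_nonneg (x := x) (y := y), dist_nonneg (x := y) (y := z)]
  have step : ∀ x : α, ∀ n : ℕ, ∃ y, y ∈ S x ∧
      ∀ z ∈ S x, F y ≤ F z + ((n : ℝ) + 1)⁻¹ := by
    intro x n
    have hne : (F '' S x).Nonempty := ⟨F x, x, hself x, rfl⟩
    have hbdd : BddBelow (F '' S x) := ⟨B, by rintro _ ⟨y, -, rfl⟩; exact hB y⟩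
    have hpos : (0 : ℝ) < ((n : ℝ) + 1)⁻¹ := by positivity
    obtain ⟨a, ⟨y, hy, rfl⟩, hlt⟩ := Real.lt_sInf_add_pos hne hpos
    refine ⟨y, hy, fun z hz => ?_⟩
    have : sInf (F '' S x) ≤ F z := csInf_le hbdd ⟨z, hz, rfl⟩
    linarith
  choose g hg1 hg2 using step
  let seq : ℕ → α := fun n => Nat.rec x0 (fun n x => g x n) n
  have hseqS : ∀ n, seq (n + 1) = g (seq n) n := fun n => rfl
  have hmem : ∀ n, seq (n + 1) ∈ S (seq n) := fun n => hg1 (seq n) n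
  have hnested : ∀ n m, n ≤ m → seq m ∈ S (seq n) := by
    intro n m hnm
    induction m, hnm using Nat.le_induction with
    | base => exact hself _
    | succ m hnm ih => exact htrans _ _ _ ih (hmem m)
  have hkey : ∀ n m, n ≤ m → F (seq m) + c * dist (seq n) (seq m) ≤ F (seq n) :=
    fun n m h => hnested n m h
  have hanti : Antitone fun n => F (seq n) := by
    intro n m hnm
    have := hkey n m hnm
    nlinarith [dist_nonneg (x := seq n) (y := seq m)]
  have hbddb : BddBelow (Set.range fun n => F (seq n)) :=
    ⟨B, by rintro _ ⟨n, rfl⟩; exact hB _⟩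
  have htend : Tendsto (fun n => F (seq n)) atTop (𝓝 (⨅ n, F (seq n))) :=
    tendsto_atTop_ciInf hanti hbddb
  set L := ⨅ n, F (seq n) with hL
  have hLle : ∀ n, L ≤ F (seq n) := fun n => ciInf_le hbddb n
  have hcauchy : CauchySeq seq := by
    rw [Metric.cauchySeq_iff']
    intro ε hε
    have : ∀ᶠ n in atTop, F (seq n) < L + c * ε :=
      htend.eventually (gt_mem_nhds (by nlinarith))
    obtain ⟨N, hN⟩ := this.exists
    refine ⟨N, fun n hn => ?_⟩
    have h1 := hkey N n hn
    have h2 := hLle n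
    rw [dist_comm]
    nlinarith
  obtain ⟨z, hz⟩ := cauchySeq_tendsto_of_complete hcauchy
  have hFz : Tendsto (fun n => F (seq n)) atTop (𝓝 (F z)) :=
    ((hF.tendsto z).comp hz)
  have hzS : ∀ n, F z + c * dist (seq n) z ≤ F (seq n) := by
    intro n
    have h1 : Tendsto (fun m => F (seq m) + c * dist (seq n) (seq m)) atTop
        (𝓝 (F z + c * dist (seq n) z)) :=
      hFz.add ((tendsto_const_nhds.dist hz).const_mul c)
    refine le_of_tendsto h1 ?_
    filter_upwards [eventually_ge_atTop n] with m hm using hkey n m hm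
  refine ⟨z, ?_, ?_⟩
  · have h := hzS 0
    have h0 : seq 0 = x0 := rfl
    rw [h0] at h
    nlinarith [dist_nonneg (x := x0) (y := z), hc]
  · intro y
    by_contra hy
    push_neg at hy
    have hyS : ∀ n, y ∈ S (seq n) := by
      intro n
      have h1 := hzS n
      have h2 := dist_triangle (seq n) z y
      simp only [hS, Set.mem_setOf_eq]
      nlinarith
    have hle : ∀ n, F (seq (n + 1)) ≤ F y + ((n : ℝ) + 1)⁻¹ := by
      intro n
      rw [hseqS n]
      exact hg2 (seq n) n y (hyS n)
    have h1 : Tendsto (fun n => F (seq (n + 1))) atTop (𝓝 (F z)) :=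
      hFz.comp (tendsto_add_atTop_nat 1)
    have h2 : Tendsto (fun n : ℕ => F y + ((n : ℝ) + 1)⁻¹) atTop (𝓝 (F y + 0)) := by
      refine tendsto_const_nhds.add ?_
      simpa using (tendsto_one_div_add_atTop_nhds_zero_nat :
        Tendsto (fun n : ℕ => 1 / ((n : ℝ) + 1)) atTop (𝓝 0))
    have h3 : F z ≤ F y + 0 := le_of_tendsto_of_tendsto' h1 h2 hle
    nlinarith [dist_nonneg (x := z) (y := y)]

set_option maxHeartbeats 1000000 in
/-- comparison principle for Monge solutions of the eikonal
equation `|∇⁻u| = f` in a complete length space. -/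
theorem monge_comparison {X : Type*} [MetricSpace X] [CompleteSpace X]
    (hlen : ∀ x y : X, ∀ ε > (0 : ℝ), ∃ ξ : ℝ → X, LipschitzWith 1 ξ ∧ ξ 0 = x ∧
      ∃ T : ℝ, 0 ≤ T ∧ T ≤ dist x y + ε ∧ ξ T = y)
    (Ω : Set X) (hΩ : IsOpen Ω) (hΩne : Ω ≠ Set.univ)
    (hΩbdd : Bornology.IsBounded Ω)
    (f : X → ℝ) (Cf : ℝ) (hfbdd : ∀ x ∈ Ω, f x ≤ Cf)
    (m : ℝ) (hm : 0 < m) (hinf : ∀ x ∈ Ω, m ≤ f x)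
    (u v : X → ℝ)
    (hu : ContinuousOn u (closure Ω)) (hv : ContinuousOn v (closure Ω))
    (hubdd : ∃ C : ℝ, ∀ x ∈ closure Ω, |u x| ≤ C)
    (hvbdd : ∃ C : ℝ, ∀ x ∈ closure Ω, |v x| ≤ C)
    (huLip : ∀ x ∈ Ω, ∃ ε > (0 : ℝ), ∃ K : NNReal,
      LipschitzOnWith K u (Metric.ball x ε ∩ Ω))
    (hvLip : ∀ x ∈ Ω, ∃ ε > (0 : ℝ), ∃ K : NNReal,
      LipschitzOnWith K v (Metric.ball x ε ∩ Ω))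
    (hsub : ∀ x ∈ Ω, subSlope u x ≤ f x)
    (hsup : ∀ x ∈ Ω, f x ≤ subSlope v x)
    (hbdry : ∀ ε > (0 : ℝ), ∃ δ > (0 : ℝ), ∀ x ∈ closure Ω,
      Metric.infDist x (frontier Ω) ≤ δ → u x - v x ≤ ε) :
    ∀ x ∈ closure Ω, u x ≤ v x := by
  by_contra hcon
  push_neg at hcon
  obtain ⟨x0, hx0c, hx0⟩ := hcon
  obtain ⟨Cu, hCu⟩ := hubdd
  obtain ⟨Cv, hCv⟩ := hvbdd
  have hCu0 : 0 ≤ Cu := le_trans (abs_nonneg _) (hCu x0 hx0c)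
  set θ := u x0 - v x0 with hθdef
  have hθ : 0 < θ := by rw [hθdef]; linarith
  set μ := min (θ / (4 * (Cu + 1))) (1 / 2) with hμdef
  have hμpos : 0 < μ := lt_min (by positivity) (by norm_num)
  have hμhalf : μ ≤ 1 / 2 := min_le_right _ _
  have hμθ : μ ≤ θ / (4 * (Cu + 1)) := min_le_left _ _
  set l := 1 - μ with hldef
  have hl0 : 0 < l := by rw [hldef]; linarith
  have hl1 : l < 1 := by rw [hldef]; linarith
  have hlu : ∀ x ∈ closure Ω, μ * |u x| ≤ θ / 4 := by
    intro x hx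
    have h1 : |u x| ≤ Cu + 1 := by linarith [hCu x hx]
    calc μ * |u x| ≤ (θ / (4 * (Cu + 1))) * (Cu + 1) :=
          mul_le_mul hμθ h1 (abs_nonneg _) (by positivity)
      _ = θ / 4 := by field_simp
  set c := μ * m / 2 with hcdef
  have hc : 0 < c := by rw [hcdef]; positivity
  haveI : CompleteSpace (closure Ω) := isClosed_closure.completeSpace_coe
  set F : closure Ω → ℝ := fun p => v ↑p - l * u ↑p with hFdef
  have hFc : Continuous F := by
    exact (hv.restrict).sub (continuous_const.mul hu.restrict)
  have hB : ∀ p : closure Ω, -Cv - Cu ≤ F p := by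
    intro p
    have h1 := abs_le.mp (hCu p p.2)
    have h2 := abs_le.mp (hCv p p.2)
    have h3 : l * u ↑p ≤ Cu := by nlinarith [h1.1, h1.2]
    simp only [hFdef]
    linarith [h2.1]
  obtain ⟨z, hz1, hz2⟩ := ekeland_aux F hFc (-Cv - Cu) hB c hc ⟨x0, hx0c⟩
  have hFx0 : F ⟨x0, hx0c⟩ ≤ -(3 / 4) * θ := by
    have h := hlu x0 hx0c
    have h2 : μ * u x0 ≤ μ * |u x0| := mul_le_mul_of_nonneg_left (le_abs_self _) hμpos.le
    have h3 : F ⟨x0, hx0c⟩ = -θ + μ * u x0 := by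
      simp only [hFdef, hldef, hθdef]; ring
    rw [h3]; linarith
  have hFz : F z ≤ -(3 / 4) * θ := le_trans hz1 hFx0
  obtain ⟨δ, hδ, hδp⟩ := hbdry (θ / 4) (by positivity)
  have hfar : ¬ Metric.infDist (z : X) (frontier Ω) ≤ δ := by
    intro hle
    have h1 := hδp (z : X) z.2 hle
    have h2 : -(θ / 4) ≤ μ * u ↑z := by
      have ha := hlu (z : X) z.2
      have hb : -|u ↑z| ≤ u ↑z := neg_abs_le _
      nlinarith
    have h3 : F z = (v ↑z - u ↑z) + μ * u ↑z := by
      simp only [hFdef, hldef]; ring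
    rw [h3] at hFz
    linarith
  have hzΩ : (z : X) ∈ Ω := by
    have hzc : (z : X) ∈ interior Ω ∪ frontier Ω := by
      rw [← closure_eq_interior_union_frontier]; exact z.2
    rcases hzc with h | h
    · rwa [hΩ.interior_eq] at h
    · exact absurd ((Metric.infDist_zero_of_mem h).le.trans hδ.le) hfar
  haveI hne : (𝓝[≠] (z : X)).NeBot := by
    by_contra hbot
    rw [not_neBot] at hbot
    have h0 : subSlope v (z : X) = 0 := by
      rw [subSlope, hbot, Filter.limsup_eq]
      simp only [Filter.eventually_bot, Set.setOf_true]
      exact Real.sInf_of_not_bddBelow not_bddBelow_univ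
    have h1 := hsup (z : X) hzΩ
    have h2 := hinf (z : X) hzΩ
    rw [h0] at h1
    linarith
  set εt := μ * m / 4 with hεtdef
  have hεtpos : 0 < εt := by rw [hεtdef]; positivity
  obtain ⟨εu, hεu, Ku, hKu⟩ := huLip (z : X) hzΩ
  have hmemz : (z : X) ∈ Metric.ball (z : X) εu ∩ Ω := ⟨Metric.mem_ball_self hεu, hzΩ⟩
  have hnb : Metric.ball (z : X) εu ∩ Ω ∈ 𝓝 (z : X) :=
    Filter.inter_mem (Metric.ball_mem_nhds _ hεu) (hΩ.mem_nhds hzΩ)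
  have hev0 : ∀ᶠ y in 𝓝[≠] (z : X), (y ∈ Metric.ball (z : X) εu ∩ Ω) ∧ y ≠ (z : X) := by
    refine Filter.Eventually.and ?_ ?_
    · exact eventually_nhdsWithin_of_eventually_nhds (eventually_of_mem hnb fun y hy => hy)
    · filter_upwards [self_mem_nhdsWithin] with y hy
      exact hy
  have hbu : Filter.IsBoundedUnder (· ≤ ·) (𝓝[≠] (z : X))
      (fun y => max (u ↑z - u y) 0 / dist (z : X) y) := by
    apply Filter.isBoundedUnder_of_eventually_le (a := (Ku : ℝ))
    filter_upwards [hev0] with y hy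
    obtain ⟨⟨hyb, hyΩ⟩, hyz⟩ := hy
    have hd : 0 < dist (z : X) y := dist_pos.mpr fun h => hyz h.symm
    rw [div_le_iff₀ hd]
    refine max_le ?_ (by positivity)
    calc u ↑z - u y ≤ |u ↑z - u y| := le_abs_self _
      _ = dist (u ↑z) (u y) := (Real.dist_eq _ _).symm
      _ ≤ Ku * dist (z : X) y := hKu.dist_le_mul _ hmemz _ ⟨hyb, hyΩ⟩
  have hfz := hinf (z : X) hzΩ
  have hsu : subSlope u (z : X) < f ↑z + εt := by
    have := hsub (z : X) hzΩ
    linarith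
  rw [subSlope] at hsu
  have hev_u := Filter.eventually_lt_of_limsup_lt hsu hbu
  have hev_v : ∀ᶠ y in 𝓝[≠] (z : X),
      max (v ↑z - v y) 0 / dist (z : X) y ≤ c + l * (f ↑z + εt) := by
    filter_upwards [hev0, hev_u] with y hy hyu
    obtain ⟨⟨hyb, hyΩ⟩, hyz⟩ := hy
    have hd : 0 < dist (z : X) y := dist_pos.mpr fun h => hyz h.symm
    have hek := hz2 ⟨y, subset_closure hyΩ⟩
    rw [Subtype.dist_eq] at hek
    simp only [hFdef] at hek
    have hmaxu : max (u ↑z - u y) 0 ≤ (f ↑z + εt) * dist (z : X) y := by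
      rw [div_lt_iff₀ hd] at hyu
      linarith
    have huzy : u ↑z - u y ≤ max (u ↑z - u y) 0 := le_max_left _ _
    have hnn : 0 ≤ (c + l * (f ↑z + εt)) * dist (z : X) y := by
      have : 0 < f ↑z + εt := by linarith
      positivity
    rw [div_le_iff₀ hd]
    refine max_le ?_ hnn
    nlinarith [hl0]
  have hcb : Filter.IsCoboundedUnder (· ≤ ·) (𝓝[≠] (z : X))
      (fun y => max (v ↑z - v y) 0 / dist (z : X) y) := by
    apply Filter.isCoboundedUnder_le_of_le (l := 𝓝[≠] (z : X)) (x := 0)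
    intro y
    positivity
  have hslv : subSlope v (z : X) ≤ c + l * (f ↑z + εt) := by
    rw [subSlope]
    exact Filter.limsup_le_of_le hcb hev_v
  have key : f ↑z ≤ c + l * (f ↑z + εt) := le_trans (hsup (z : X) hzΩ) hslv
  rw [hcdef, hldef, hεtdef] at key
  nlinarith [mul_le_mul_of_nonneg_left hfz hμpos.le, mul_pos hμpos hm,
    mul_pos (mul_pos hμpos hμpos) hm]
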